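/- Suppose that for every finite sequence p : n → ω and every clopen set U in the product X_p = ∏_{i<n} X(F_{p(i)}) there is N ∈ ω with either U ⊆ Sᴺ_p or Tᴺ_p ⊆ U. Then every finite product X_p is CLP-compact. -/

import Mathlib

/-- CLP-compact: every clopen cover has a finite subcover. -/
def CLPCompact (X : Type*) [TopologicalSpace X] : Prop :=
  ∀ C : Set (Set X), (∀ U ∈ C, IsClopen U) → ⋃₀ C = Set.univ →
    ∃ D ⊆ C, D.Finite ∧ ⋃₀ D = Set.univ

/-- ℕ* : the nonprincipal ultrafilters on ℕ, with the topology inherited from βℕ. -/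
def NStar : Type := {U : Ultrafilter ℕ // (U : Filter ℕ) ≤ Filter.cofinite}

instance : TopologicalSpace NStar := instTopologicalSpaceSubtype

/-- A* : the set of nonprincipal ultrafilters containing A. -/
def AStar (A : Set ℕ) : Set NStar := {U | A ∈ U.1}

/-- The space X(F): underlying set ℕ ⊔ F. -/
def XF (F : Set (Set NStar)) : Type := ℕ ⊕ F

/-- The coarsest topology making each {n} (n ∈ ℕ) open, and each {K} ∪ A open
whenever K ∈ F, A ⊆ ℕ and K ⊆ A*. -/
instance (F : Set (Set NStar)) : TopologicalSpace (XF F) :=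
  TopologicalSpace.generateFrom
    ({S | ∃ n : ℕ, S = {Sum.inl n}} ∪
     {S | ∃ (K : F) (A : Set ℕ), (K : Set NStar) ⊆ AStar A ∧
        S = insert (Sum.inr K) (Sum.inl '' A)})

/-- If `F` is empty, then `X(F)` is discrete: every subset is open. -/
lemma XF_open_of_empty {F : Set (Set NStar)} (hF : ¬ F.Nonempty) (S : Set (XF F)) :
    IsOpen S := by
  have hS : S = ⋃ k ∈ {k : ℕ | Sum.inl k ∈ S}, ({Sum.inl k} : Set (XF F)) := by
    ext x
    cases x with
    | inl k =>
      simp only [Set.mem_iUnion, Set.mem_singleton_iff, Set.mem_setOf_eq]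
      exact ⟨fun h => Set.mem_iUnion₂.2 ⟨k, h, rfl⟩, fun h => by obtain ⟨i, hi, he⟩ := Set.mem_iUnion₂.1 h; obtain rfl := Sum.inl.inj he; exact hi⟩
    | inr a => exact absurd ⟨a.1, a.2⟩ hF
  rw [hS]
  exact isOpen_biUnion fun k _ => TopologicalSpace.GenerateOpen.basic _ (Or.inl ⟨k, rfl⟩)

/-- If every clopen subset of every finite product X_p = ∏_{i<n} X(F_{p(i)}) is, for
some N, either contained in Sᴺ_p or contains Tᴺ_p, then every X_p is CLP-compact. -/
theorem clp_compact_of_fin_cofin (F : ℕ → Set (Set NStar))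
    (hne : ∀ i, ∀ K ∈ F i, Set.Nonempty K) (hcl : ∀ i, ∀ K ∈ F i, IsClosed K)
    (hdisj : ∀ i, ∀ K ∈ F i, ∀ L ∈ F i, K ≠ L → Disjoint K L)
    (h : ∀ (n : ℕ) (p : Fin n → ℕ) (U : Set (∀ i : Fin n, XF (F (p i)))), IsClopen U →
      ∃ N : ℕ,
        (∀ y ∈ U, ∃ i, ∃ m : ℕ, m < N ∧ y i = Sum.inl m) ∨
        (∀ y : ∀ i : Fin n, XF (F (p i)), (∀ i, ∀ m : ℕ, y i = Sum.inl m → N ≤ m) → y ∈ U)) :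
    ∀ (n : ℕ) (p : Fin n → ℕ), CLPCompact (∀ i : Fin n, XF (F (p i))) := by
  intro n
  induction n with
  | zero =>
    intro p C hC hcov
    set x : ∀ i : Fin 0, XF (F (p i)) := fun i => i.elim0 with hxdef
    have hx : x ∈ ⋃₀ C := by rw [hcov]; trivial
    obtain ⟨U, hU, hxU⟩ := hx
    refine ⟨{U}, by simpa using hU, Set.finite_singleton U, ?_⟩
    apply Set.eq_univ_of_forall
    intro y
    have : y = x := funext fun i => i.elim0
    rw [Set.sUnion_singleton, this]
    exact hxU
  | succ n IH =>
    intro p C hC hcov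
    by_cases hne' : ∀ i : Fin (n + 1), (F (p i)).Nonempty
    · -- every factor has a non-natural point
      choose K hK using hne'
      set x : ∀ i, XF (F (p i)) := fun i => Sum.inr ⟨K i, hK i⟩ with hxdef
      have hx : x ∈ ⋃₀ C := by rw [hcov]; trivial
      obtain ⟨U₀, hU₀C, hxU₀⟩ := hx
      obtain ⟨N, hN⟩ := h (n + 1) p U₀ (hC _ hU₀C)
      have hT : ∀ y : ∀ i, XF (F (p i)), (∀ i, ∀ m : ℕ, y i = Sum.inl m → N ≤ m) → y ∈ U₀ := by
        rcases hN with h1 | h2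
        · exfalso
          obtain ⟨i, m, _, him⟩ := h1 x hxU₀
          simp [hxdef] at him
        · exact h2
      -- each slice {y | y i = Sum.inl m} is covered by finitely many members of C
      have slice : ∀ (i : Fin (n + 1)) (m : ℕ), ∃ D ⊆ C, D.Finite ∧
          ∀ y : ∀ j, XF (F (p j)), y i = Sum.inl m → ∃ V ∈ D, y ∈ V := by
        intro i m
        set φ : (∀ j : Fin n, XF (F (p (i.succAbove j)))) → (∀ j, XF (F (p j))) :=
          fun z => i.insertNth (Sum.inl m) z with hφdef
        have hφc : Continuous φ := Continuous.finInsertNth i continuous_const continuous_id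
        obtain ⟨D', hD'sub, hD'fin, hD'cov⟩ :=
          IH (fun j => p (i.succAbove j)) ((fun U => φ ⁻¹' U) '' C)
            (by rintro _ ⟨U, hU, rfl⟩; exact (hC U hU).preimage hφc)
            (by
              apply Set.eq_univ_of_forall
              intro z
              have : φ z ∈ ⋃₀ C := by rw [hcov]; trivial
              obtain ⟨U, hU, hz⟩ := this
              exact ⟨φ ⁻¹' U, ⟨U, hU, rfl⟩, hz⟩)
        have hsel : ∀ V ∈ D', ∃ U ∈ C, φ ⁻¹' U = V := by
          intro V hV
          obtain ⟨U, hU, rfl⟩ := hD'sub hV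
          exact ⟨U, hU, rfl⟩
        choose! g hg1 hg2 using hsel
        refine ⟨g '' D', ?_, hD'fin.image g, ?_⟩
        · rintro _ ⟨V, hV, rfl⟩; exact hg1 V hV
        · intro y hy
          set z : ∀ j : Fin n, XF (F (p (i.succAbove j))) := i.removeNth y with hzdef
          have hz : z ∈ ⋃₀ D' := by rw [hD'cov]; trivial
          obtain ⟨V, hV, hzV⟩ := hz
          refine ⟨g V, ⟨V, hV, rfl⟩, ?_⟩
          have hyz : φ z = y := by
            rw [hφdef]
            simp only
            rw [← hy, hzdef, Fin.insertNth_self_removeNth]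
          have : z ∈ φ ⁻¹' (g V) := by rw [hg2 V hV]; exact hzV
          rwa [← hyz]
      choose D hDsub hDfin hDcov using slice
      refine ⟨insert U₀ (⋃ (i : Fin (n + 1)) (m : Fin N), D i m), ?_, ?_, ?_⟩
      · apply Set.insert_subset hU₀C
        exact Set.iUnion_subset fun i => Set.iUnion_subset fun m => hDsub i m
      · exact (Set.finite_iUnion fun i =>
          Set.finite_iUnion fun m : Fin N => hDfin i m).insert U₀
      · apply Set.eq_univ_of_forall
        intro y
        by_cases hy : ∀ i, ∀ m : ℕ, y i = Sum.inl m → N ≤ m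
        · exact ⟨U₀, Set.mem_insert _ _, hT y hy⟩
        · push_neg at hy
          obtain ⟨i, m, him, hmN⟩ := hy
          obtain ⟨V, hV, hyV⟩ := hDcov i m y him
          refine ⟨V, Set.mem_insert_of_mem _ ?_, hyV⟩
          exact Set.mem_iUnion.2 ⟨i, Set.mem_iUnion.2 ⟨⟨m, hmN⟩, hV⟩⟩
    · -- some factor is a copy of ℕ: contradiction with h via the set of even numbers
      exfalso
      push_neg at hne'
      obtain ⟨i, hFi⟩ := hne'
      replace hFi : ¬ (F (p i)).Nonempty := by rw [hFi]; exact Set.not_nonempty_empty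
      set S : Set (XF (F (p i))) := {x | ∃ m : ℕ, x = Sum.inl (2 * m)} with hSdef
      have hSclopen : IsClopen S :=
        ⟨⟨XF_open_of_empty hFi Sᶜ⟩, XF_open_of_empty hFi S⟩
      set U : Set (∀ j, XF (F (p j))) := (fun y => y i) ⁻¹' S with hUdef
      have hUclopen : IsClopen U := hSclopen.preimage (continuous_apply i)
      obtain ⟨N, hN⟩ := h (n + 1) p U hUclopen
      rcases hN with h1 | h2
      · obtain ⟨j, m, hm, hjm⟩ := h1 (fun _ => Sum.inl (2 * N)) ⟨N, rfl⟩
        obtain rfl := Sum.inl.inj hjm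
        omega
      · have := h2 (fun _ => Sum.inl (2 * N + 1))
          (fun j m hm => by obtain rfl := Sum.inl.inj hm; omega)
        obtain ⟨m, hm⟩ := this
        obtain hm' := Sum.inl.inj hm
        omega
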